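/- arXiv:1911.09557 — 2 statements merged into one kernel-verified Lean document; each statement's English description precedes it below -/
import Mathlib

section
/- Let α' < α be real numbers and let f : ℝ^N × ℂ → ℂ be continuous with S_{f,M} := sup{ ⟨x⟩^α |f(x,u)| : x ∈ ℝ^N, |u| ≤ M } < ∞ for every M > 0. Then the substitution operator N_f(u)(x) = f(x,u(x)) maps L^∞(ℝ^N) into L^∞_{α'}(ℝ^N), is bounded on bounded sets, and is continuous as a map L^∞(ℝ^N) → L^∞_{α'}(ℝ^N). -/
/-- Lemma 3.1: the substitution operator `N_f(u)(x) = f(x, u(x))` maps `L^∞(ℝ^N)` into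
`L^∞_{α'}(ℝ^N)` for `α' < α`, is bounded on bounded sets, and is continuous. -/
theorem stmt_5 (N : ℕ) (α α' : ℝ) (hαα' : α' < α)
    (f : EuclideanSpace ℝ (Fin N) × ℂ → ℂ) (hf : Continuous f)
    (hS : ∀ M > (0 : ℝ), ∃ S : ℝ, ∀ (x : EuclideanSpace ℝ (Fin N)) (u : ℂ),
      ‖u‖ ≤ M → (1 + ‖x‖ ^ 2) ^ (α / 2) * ‖f (x, u)‖ ≤ S) :
    (∀ M > (0 : ℝ), ∃ S : ℝ, ∀ u : EuclideanSpace ℝ (Fin N) → ℂ,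
      (∀ x, ‖u x‖ ≤ M) →
      ∀ x, (1 + ‖x‖ ^ 2) ^ (α' / 2) * ‖f (x, u x)‖ ≤ S) ∧
    (∀ (u : EuclideanSpace ℝ (Fin N) → ℂ) (M : ℝ), (∀ x, ‖u x‖ ≤ M) →
      ∀ ε > (0 : ℝ), ∃ δ > (0 : ℝ), ∀ u' : EuclideanSpace ℝ (Fin N) → ℂ,
        (∀ x, ‖u' x - u x‖ ≤ δ) →
        ∀ x, (1 + ‖x‖ ^ 2) ^ (α' / 2) * ‖f (x, u' x) - f (x, u x)‖ ≤ ε) := by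
  constructor
  · intro M hM
    obtain ⟨S, hSb⟩ := hS M hM
    refine ⟨S, fun u hu x => ?_⟩
    have h1 : (1:ℝ) ≤ 1 + ‖x‖ ^ 2 := by nlinarith [sq_nonneg ‖x‖]
    have hw : (1 + ‖x‖ ^ 2) ^ (α' / 2) ≤ (1 + ‖x‖ ^ 2) ^ (α / 2) :=
      Real.rpow_le_rpow_of_exponent_le h1 (by linarith)
    calc (1 + ‖x‖ ^ 2) ^ (α' / 2) * ‖f (x, u x)‖
        ≤ (1 + ‖x‖ ^ 2) ^ (α / 2) * ‖f (x, u x)‖ :=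
          mul_le_mul_of_nonneg_right hw (norm_nonneg _)
      _ ≤ S := hSb x (u x) (hu x)
  · intro u M hu ε hε
    set M' : ℝ := max M 0 + 1 with hM'
    have hM'pos : 0 < M' := by positivity
    obtain ⟨S, hSb⟩ := hS M' hM'pos
    have hS0 : 0 ≤ S := le_trans (by positivity) (hSb 0 0 (by simpa using hM'pos.le))
    set β : ℝ := (α - α') / 2 with hβ
    have hβpos : 0 < β := by rw [hβ]; linarith
    have htend : Filter.Tendsto (fun R : ℝ => (1 + R ^ 2) ^ (-β)) Filter.atTop (nhds 0) := by
      have h1 : Filter.Tendsto (fun R : ℝ => 1 + R ^ 2) Filter.atTop Filter.atTop :=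
        Filter.tendsto_atTop_add_const_left _ _ (Filter.tendsto_pow_atTop (by norm_num))
      exact (tendsto_rpow_neg_atTop hβpos).comp h1
    have hev := htend.eventually (gt_mem_nhds (show (0:ℝ) < ε/2/(2*S+1) by positivity))
    obtain ⟨R₀, hR₀⟩ := Filter.eventually_atTop.mp hev
    set R : ℝ := max R₀ 0 with hRdef
    have hRval : (1 + R ^ 2) ^ (-β) < ε/2/(2*S+1) := hR₀ R (le_max_left _ _)
    have hR0 : 0 ≤ R := le_max_right _ _
    have hK : IsCompact ((Metric.closedBall (0 : EuclideanSpace ℝ (Fin N)) R) ×ˢ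
        (Metric.closedBall (0:ℂ) M')) :=
      (isCompact_closedBall _ _).prod (isCompact_closedBall _ _)
    have huc := hK.uniformContinuousOn_of_continuous hf.continuousOn
    set C : ℝ := max 1 ((1 + R ^ 2) ^ (α' / 2)) with hC
    have hCpos : 0 < C := lt_of_lt_of_le one_pos (le_max_left _ _)
    obtain ⟨δ₀, hδ₀pos, hδ₀⟩ := Metric.uniformContinuousOn_iff.mp huc (ε / C) (by positivity)
    refine ⟨min (δ₀/2) 1, by positivity, fun u' hu' x => ?_⟩
    have huM' : ∀ y, ‖u y‖ ≤ M' := fun y =>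
      le_trans (hu y) (le_trans (le_max_left M 0) (by rw [hM']; linarith))
    have hu'M' : ∀ y, ‖u' y‖ ≤ M' := by
      intro y
      have h2 : ‖u' y‖ ≤ ‖u' y - u y‖ + ‖u y‖ := by
        calc ‖u' y‖ = ‖u' y - u y + u y‖ := by rw [sub_add_cancel]
          _ ≤ _ := norm_add_le _ _
      have h3 := hu' y
      have h4 : min (δ₀/2) 1 ≤ 1 := min_le_right _ _
      have h5 : ‖u y‖ ≤ max M 0 := le_trans (hu y) (le_max_left _ _)
      rw [hM']; linarith
    have hb : (1:ℝ) ≤ 1 + ‖x‖ ^ 2 := by nlinarith [sq_nonneg ‖x‖]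
    by_cases hx : ‖x‖ ≤ R
    · -- inside the ball: use uniform continuity
      have hmem : ∀ v : ℂ, ‖v‖ ≤ M' →
          (x, v) ∈ (Metric.closedBall (0 : EuclideanSpace ℝ (Fin N)) R) ×ˢ
            (Metric.closedBall (0:ℂ) M') := by
        intro v hv
        constructor
        · simpa [Metric.mem_closedBall, dist_zero_right] using hx
        · simpa [Metric.mem_closedBall, dist_zero_right] using hv
      have hdist : dist ((x, u' x) : EuclideanSpace ℝ (Fin N) × ℂ) (x, u x) < δ₀ := by
        rw [Prod.dist_eq]
        simp only [dist_self]
        have : dist (u' x) (u x) ≤ min (δ₀/2) 1 := by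
          rw [Complex.dist_eq]; exact hu' x
        have h6 : min (δ₀/2) 1 ≤ δ₀/2 := min_le_left _ _
        have : dist (u' x) (u x) < δ₀ := by linarith
        simp [this, hδ₀pos]
      have hd := hδ₀ _ (hmem _ (hu'M' x)) _ (hmem _ (huM' x)) hdist
      rw [Complex.dist_eq] at hd
      have hwC : (1 + ‖x‖ ^ 2) ^ (α' / 2) ≤ C := by
        rcases le_or_gt 0 α' with h | h
        · refine le_trans ?_ (le_max_right _ _)
          exact Real.rpow_le_rpow (by positivity) (by nlinarith [norm_nonneg x]) (by linarith)
        · refine le_trans ?_ (le_max_left _ _)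
          exact Real.rpow_le_one_of_one_le_of_nonpos hb (by linarith)
      calc (1 + ‖x‖ ^ 2) ^ (α' / 2) * ‖f (x, u' x) - f (x, u x)‖
          ≤ C * (ε / C) :=
            mul_le_mul hwC hd.le (norm_nonneg _) hCpos.le
        _ = ε := mul_div_cancel₀ _ hCpos.ne'
    · -- outside the ball: use decay
      push_neg at hx
      have hsplit : (1 + ‖x‖ ^ 2) ^ (α' / 2)
          = (1 + ‖x‖ ^ 2) ^ (-β) * (1 + ‖x‖ ^ 2) ^ (α / 2) := by
        rw [← Real.rpow_add (by positivity)]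
        congr 1
        rw [hβ]; ring
      have htri : ‖f (x, u' x) - f (x, u x)‖
          ≤ ‖f (x, u' x)‖ + ‖f (x, u x)‖ := by
        simpa using norm_sub_le (f (x, u' x)) (f (x, u x))
      have hA := hSb x (u' x) (hu'M' x)
      have hB := hSb x (u x) (huM' x)
      have hinner : (1 + ‖x‖ ^ 2) ^ (α / 2) * ‖f (x, u' x) - f (x, u x)‖
          ≤ 2 * S := by
        have h7 := mul_le_mul_of_nonneg_left htri
          (Real.rpow_nonneg (by positivity : (0:ℝ) ≤ 1 + ‖x‖ ^ 2) (α / 2))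
        rw [mul_add] at h7
        linarith
      have h2 : (1 + R ^ 2) ≤ 1 + ‖x‖ ^ 2 := by nlinarith
      have hmono : (1 + ‖x‖ ^ 2) ^ (-β) ≤ (1 + R ^ 2) ^ (-β) := by
        rw [Real.rpow_neg (by positivity), Real.rpow_neg (by positivity)]
        exact inv_anti₀ (Real.rpow_pos_of_pos (by positivity) _)
          (Real.rpow_le_rpow (by positivity) h2 hβpos.le)
      have hfin : (1 + R ^ 2) ^ (-β) * (2 * S) ≤ ε := by
        have hle1 : (1 + R ^ 2) ^ (-β) * (2 * S) ≤ (ε/2/(2*S+1)) * (2 * S) :=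
          mul_le_mul_of_nonneg_right hRval.le (by linarith)
        have hle2 : (ε/2/(2*S+1)) * (2 * S) ≤ ε := by
          rw [div_mul_eq_mul_div, div_le_iff₀ (by linarith)]
          nlinarith [mul_nonneg hε.le hS0]
        linarith
      calc (1 + ‖x‖ ^ 2) ^ (α' / 2) * ‖f (x, u' x) - f (x, u x)‖
          = (1 + ‖x‖ ^ 2) ^ (-β) *
              ((1 + ‖x‖ ^ 2) ^ (α / 2) * ‖f (x, u' x) - f (x, u x)‖) := by
            rw [hsplit]; ring
        _ ≤ (1 + ‖x‖ ^ 2) ^ (-β) * (2 * S) :=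
            mul_le_mul_of_nonneg_left hinner (Real.rpow_nonneg (by positivity) _)
        _ ≤ (1 + R ^ 2) ^ (-β) * (2 * S) :=
            mul_le_mul_of_nonneg_right hmono (by linarith)
        _ ≤ ε := hfin
end

section
/- Let α' < α and let f : ℝ^N × ℂ → ℂ be continuous with f(x,·) real-differentiable for every x, with continuous derivative f' = ∂_u f : ℝ^N × ℂ → L_ℝ(ℂ,ℂ) satisfying T_{f,M} := sup{ ⟨x⟩^α ‖f'(x,u)‖ : x ∈ ℝ^N, |u| ≤ M } < ∞ for every M > 0, and sup_{|u|≤M,x} ⟨x⟩^α |f(x,u)| < ∞ for every M. Then the substitution operator N_f : L^∞(ℝ^N) → L^∞_{α'}(ℝ^N) is continuously Fréchet differentiable, with derivative N_f'(u)v (x) = f'(x,u(x)) v(x). -/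
open Filter

lemma key_lemma (N : ℕ) (α α' : ℝ) (hαα' : α' < α)
    (f' : EuclideanSpace ℝ (Fin N) → ℂ → (ℂ →L[ℝ] ℂ))
    (hf' : Continuous fun p : EuclideanSpace ℝ (Fin N) × ℂ => f' p.1 p.2)
    (hT : ∀ M > (0 : ℝ), ∃ T : ℝ, ∀ (x : EuclideanSpace ℝ (Fin N)) (u : ℂ),
      ‖u‖ ≤ M → (1 + ‖x‖ ^ 2) ^ (α / 2) * ‖f' x u‖ ≤ T)
    (M : ℝ) (hM : 0 ≤ M) (ε : ℝ) (hε : 0 < ε) :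
    ∃ δ > (0:ℝ), δ ≤ 1 ∧ ∀ (x : EuclideanSpace ℝ (Fin N)) (a b : ℂ),
      ‖b‖ ≤ M → ‖a - b‖ ≤ δ →
      (1 + ‖x‖ ^ 2) ^ (α' / 2) * ‖f' x a - f' x b‖ ≤ ε := by
  obtain ⟨T, hTbd⟩ := hT (M + 2) (by linarith)
  set T' : ℝ := max T 1 with hT'def
  have hT'pos : 0 < T' := lt_of_lt_of_le one_pos (le_max_right _ _)
  have hT'T : T ≤ T' := le_max_left _ _
  set β : ℝ := (α - α') / 2 with hβdef
  have hβ : 0 < β := by simp [hβdef]; linarith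
  -- choose R
  have htend : Tendsto (fun r : ℝ => (1 + r ^ 2) ^ (-β)) atTop (nhds 0) := by
    have h1 : Tendsto (fun r : ℝ => 1 + r ^ 2) atTop atTop :=
      tendsto_atTop_add_const_left _ 1 (tendsto_pow_atTop two_ne_zero)
    exact (tendsto_rpow_neg_atTop hβ).comp h1
  have hev : ∀ᶠ r : ℝ in atTop, (1 + r ^ 2) ^ (-β) < ε / (2 * T') :=
    htend.eventually_lt_const (by positivity)
  obtain ⟨R, hR⟩ := (hev.and (eventually_ge_atTop (0:ℝ))).exists
  obtain ⟨hRsmall, hR0⟩ := hR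
  -- compact set and uniform continuity
  set C : ℝ := max 1 ((1 + R ^ 2) ^ (α' / 2)) with hCdef
  have hCpos : 0 < C := lt_of_lt_of_le one_pos (le_max_left _ _)
  set K : Set (EuclideanSpace ℝ (Fin N) × ℂ) :=
    (Metric.closedBall 0 R) ×ˢ (Metric.closedBall 0 (M + 2)) with hKdef
  have hKc : IsCompact K := (isCompact_closedBall _ _).prod (isCompact_closedBall _ _)
  have huc : UniformContinuousOn (fun p : EuclideanSpace ℝ (Fin N) × ℂ => f' p.1 p.2) K :=
    hKc.uniformContinuousOn_of_continuous hf'.continuousOn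
  rw [Metric.uniformContinuousOn_iff] at huc
  obtain ⟨δ₀, hδ₀pos, hδ₀⟩ := huc (ε / C) (by positivity)
  refine ⟨min (δ₀ / 2) 1, by positivity, min_le_right _ _, ?_⟩
  intro x a b hb hab
  have hwpos : (0:ℝ) < (1 + ‖x‖ ^ 2) ^ (α' / 2) := Real.rpow_pos_of_pos (by positivity) _
  have ha : ‖a‖ ≤ M + 1 := by
    calc ‖a‖ = ‖b + (a - b)‖ := by ring_nf
    _ ≤ ‖b‖ + ‖a - b‖ := norm_add_le _ _
    _ ≤ M + 1 := by have := le_trans hab (min_le_right _ _); linarith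
  by_cases hx : ‖x‖ ≤ R
  · -- compact region
    have hmemx : x ∈ Metric.closedBall (0 : EuclideanSpace ℝ (Fin N)) R := by
      simpa [Metric.mem_closedBall, dist_eq_norm] using hx
    have hmema : (x, a) ∈ K := by
      refine ⟨hmemx, ?_⟩
      simp only [Metric.mem_closedBall, dist_eq_norm, sub_zero]
      linarith
    have hmemb : (x, b) ∈ K := by
      refine ⟨hmemx, ?_⟩
      simp only [Metric.mem_closedBall, dist_eq_norm, sub_zero]
      linarith
    have hdist : dist ((x, a) : EuclideanSpace ℝ (Fin N) × ℂ) (x, b) < δ₀ := by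
      rw [Prod.dist_eq]
      simp only [dist_self]
      have : dist a b < δ₀ := by
        rw [Complex.dist_eq]
        exact lt_of_le_of_lt (le_trans hab (min_le_left _ _)) (by linarith)
      exact max_lt (by linarith) this
    have hnear := hδ₀ _ hmema _ hmemb hdist
    rw [dist_eq_norm] at hnear
    have hwC : (1 + ‖x‖ ^ 2) ^ (α' / 2) ≤ C := by
      rcases le_or_gt 0 (α' / 2) with h | h
      · refine le_trans ?_ (le_max_right 1 _)
        exact Real.rpow_le_rpow (by positivity) (by nlinarith [norm_nonneg x]) h
      · refine le_trans ?_ (le_max_left 1 _)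
        exact Real.rpow_le_one_of_one_le_of_nonpos (by nlinarith [norm_nonneg x]) h.le
    calc (1 + ‖x‖ ^ 2) ^ (α' / 2) * ‖f' x a - f' x b‖
        ≤ C * (ε / C) := mul_le_mul hwC hnear.le (norm_nonneg _) hCpos.le
    _ = ε := by field_simp
  · push_neg at hx
    have hsplit : (1 + ‖x‖ ^ 2) ^ (α' / 2) = (1 + ‖x‖ ^ 2) ^ (-β) * (1 + ‖x‖ ^ 2) ^ (α / 2) := by
      rw [← Real.rpow_add (by positivity)]
      congr 1
      simp [hβdef]; ring
    have hba : (1 + ‖x‖ ^ 2) ^ (α / 2) * ‖f' x a‖ ≤ T' :=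
      le_trans (hTbd x a (by linarith)) hT'T
    have hbb : (1 + ‖x‖ ^ 2) ^ (α / 2) * ‖f' x b‖ ≤ T' :=
      le_trans (hTbd x b (by linarith)) hT'T
    have hwneg : (1 + ‖x‖ ^ 2) ^ (-β) ≤ ε / (2 * T') := by
      refine le_trans ?_ hRsmall.le
      exact Real.rpow_le_rpow_of_nonpos (by positivity) (by nlinarith) (by linarith)
    have hnorm : ‖f' x a - f' x b‖ ≤ ‖f' x a‖ + ‖f' x b‖ := norm_sub_le _ _
    have hwapos : (0:ℝ) ≤ (1 + ‖x‖ ^ 2) ^ (α / 2) := (Real.rpow_pos_of_pos (by positivity) _).le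
    calc (1 + ‖x‖ ^ 2) ^ (α' / 2) * ‖f' x a - f' x b‖
        = (1 + ‖x‖ ^ 2) ^ (-β) * ((1 + ‖x‖ ^ 2) ^ (α / 2) * ‖f' x a - f' x b‖) := by
          rw [hsplit]; ring
      _ ≤ (ε / (2 * T')) * (2 * T') := by
          refine mul_le_mul hwneg ?_ (by positivity) (by positivity)
          calc (1 + ‖x‖ ^ 2) ^ (α / 2) * ‖f' x a - f' x b‖
              ≤ (1 + ‖x‖ ^ 2) ^ (α / 2) * (‖f' x a‖ + ‖f' x b‖) := by
                exact mul_le_mul_of_nonneg_left hnorm hwapos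
            _ = (1 + ‖x‖ ^ 2) ^ (α / 2) * ‖f' x a‖ + (1 + ‖x‖ ^ 2) ^ (α / 2) * ‖f' x b‖ := by ring
            _ ≤ 2 * T' := by linarith
      _ = ε := by field_simp

/-- Lemma 3.2: under weighted bounds on `f` and its derivative `f' = ∂_u f`, the
substitution operator `N_f : L^∞(ℝ^N) → L^∞_{α'}(ℝ^N)` is continuously Fréchet
differentiable with `(N_f'(u)v)(x) = f'(x, u(x)) v(x)`.  The first conclusion expresses
Fréchet differentiability at each `u ∈ L^∞` (remainder `o(‖w‖_∞)` in the `L^∞_{α'}`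
norm), the second expresses continuity of `u ↦ N_{f'}(u)` in the operator norm. -/
theorem stmt_6 (N : ℕ) (α α' : ℝ) (hαα' : α' < α)
    (f : EuclideanSpace ℝ (Fin N) → ℂ → ℂ)
    (f' : EuclideanSpace ℝ (Fin N) → ℂ → (ℂ →L[ℝ] ℂ))
    (hf : Continuous fun p : EuclideanSpace ℝ (Fin N) × ℂ => f p.1 p.2)
    (hf' : Continuous fun p : EuclideanSpace ℝ (Fin N) × ℂ => f' p.1 p.2)
    (hderiv : ∀ (x : EuclideanSpace ℝ (Fin N)) (u : ℂ), HasFDerivAt (f x) (f' x u) u)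
    (hS : ∀ M > (0 : ℝ), ∃ S : ℝ, ∀ (x : EuclideanSpace ℝ (Fin N)) (u : ℂ),
      ‖u‖ ≤ M → (1 + ‖x‖ ^ 2) ^ (α / 2) * ‖f x u‖ ≤ S)
    (hT : ∀ M > (0 : ℝ), ∃ T : ℝ, ∀ (x : EuclideanSpace ℝ (Fin N)) (u : ℂ),
      ‖u‖ ≤ M → (1 + ‖x‖ ^ 2) ^ (α / 2) * ‖f' x u‖ ≤ T) :
    (∀ (u : EuclideanSpace ℝ (Fin N) → ℂ) (M : ℝ), (∀ x, ‖u x‖ ≤ M) →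
      ∀ ε > (0 : ℝ), ∃ δ > (0 : ℝ), ∀ (w : EuclideanSpace ℝ (Fin N) → ℂ) (η : ℝ),
        0 ≤ η → η ≤ δ → (∀ x, ‖w x‖ ≤ η) →
        ∀ x, (1 + ‖x‖ ^ 2) ^ (α' / 2) *
          ‖f x (u x + w x) - f x (u x) - f' x (u x) (w x)‖ ≤ ε * η) ∧
    (∀ (u : EuclideanSpace ℝ (Fin N) → ℂ) (M : ℝ), (∀ x, ‖u x‖ ≤ M) →
      ∀ ε > (0 : ℝ), ∃ δ > (0 : ℝ), ∀ u' : EuclideanSpace ℝ (Fin N) → ℂ,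
        (∀ x, ‖u' x - u x‖ ≤ δ) →
        ∀ (x : EuclideanSpace ℝ (Fin N)) (v : ℂ),
          (1 + ‖x‖ ^ 2) ^ (α' / 2) * ‖f' x (u' x) v - f' x (u x) v‖ ≤
            ε * ‖v‖) := by
  constructor
  · -- differentiability: remainder estimate
    intro u M hu ε hε
    have hM : 0 ≤ M := le_trans (norm_nonneg _) (hu 0)
    obtain ⟨δ, hδpos, hδ1, hkey⟩ := key_lemma N α α' hαα' f' hf' hT M hM ε hε
    refine ⟨δ, hδpos, ?_⟩
    intro w η hη0 hηδ hw x
    set W : ℝ := (1 + ‖x‖ ^ 2) ^ (α' / 2) with hWdef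
    have hWpos : 0 < W := Real.rpow_pos_of_pos (by positivity) _
    set g : ℂ → ℂ := fun t => f x (u x + t) - f' x (u x) t with hgdef
    set s : Set ℂ := Metric.closedBall 0 η with hsdef
    have hgderiv : ∀ t ∈ s, HasFDerivWithinAt g (f' x (u x + t) - f' x (u x)) s t := by
      intro t _
      have h1 : HasFDerivAt (fun t : ℂ => f x (u x + t)) (f' x (u x + t)) t := by
        have := (hderiv x (u x + t)).comp t
          ((hasFDerivAt_id t).const_add (u x))
        exact this
      exact ((h1.sub ((f' x (u x)).hasFDerivAt)).hasFDerivWithinAt)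
    have hbound : ∀ t ∈ s, ‖f' x (u x + t) - f' x (u x)‖ ≤ ε / W := by
      intro t ht
      rw [Metric.mem_closedBall, dist_zero_right] at ht
      have habs : ‖u x + t - u x‖ ≤ δ := by
        simp only [add_sub_cancel_left]
        exact le_trans ht hηδ
      have := hkey x (u x + t) (u x) (hu x) habs
      rw [le_div_iff₀ hWpos]
      linarith [this]
    have hmvt := Convex.norm_image_sub_le_of_norm_hasFDerivWithin_le hgderiv hbound
      (convex_closedBall _ _) (Metric.mem_closedBall_self hη0)
      (by rw [Metric.mem_closedBall, dist_zero_right]; exact hw x)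
    have hg0 : g 0 = f x (u x) := by simp [hgdef]
    have hgw : g (w x) = f x (u x + w x) - f' x (u x) (w x) := rfl
    have hrw : f x (u x + w x) - f x (u x) - f' x (u x) (w x) = g (w x) - g 0 := by
      rw [hg0, hgw]; ring
    rw [hrw]
    calc W * ‖g (w x) - g 0‖ ≤ W * ((ε / W) * ‖w x - 0‖) :=
          mul_le_mul_of_nonneg_left hmvt hWpos.le
      _ = ε * ‖w x‖ := by rw [sub_zero]; field_simp
      _ ≤ ε * η := by
          refine mul_le_mul_of_nonneg_left ?_ hε.le
          exact hw x
  · -- continuity of the derivative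
    intro u M hu ε hε
    have hM : 0 ≤ M := le_trans (norm_nonneg _) (hu 0)
    obtain ⟨δ, hδpos, hδ1, hkey⟩ := key_lemma N α α' hαα' f' hf' hT M hM ε hε
    refine ⟨δ, hδpos, ?_⟩
    intro u' hu' x v
    have hWpos : 0 < (1 + ‖x‖ ^ 2) ^ (α' / 2) := Real.rpow_pos_of_pos (by positivity) _
    have hop := hkey x (u' x) (u x) (hu x) (hu' x)
    have hv : ‖f' x (u' x) v - f' x (u x) v‖
        ≤ ‖f' x (u' x) - f' x (u x)‖ * ‖v‖ := by
      have : f' x (u' x) v - f' x (u x) v = (f' x (u' x) - f' x (u x)) v := by simp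
      rw [this]
      exact (f' x (u' x) - f' x (u x)).le_opNorm v
    calc (1 + ‖x‖ ^ 2) ^ (α' / 2) * ‖f' x (u' x) v - f' x (u x) v‖
        ≤ (1 + ‖x‖ ^ 2) ^ (α' / 2) * (‖f' x (u' x) - f' x (u x)‖ * ‖v‖) :=
          mul_le_mul_of_nonneg_left hv hWpos.le
      _ = ((1 + ‖x‖ ^ 2) ^ (α' / 2) * ‖f' x (u' x) - f' x (u x)‖) * ‖v‖ := by ring
      _ ≤ ε * ‖v‖ :=
          mul_le_mul_of_nonneg_right hop (norm_nonneg _)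
end
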